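/- Let H be a hyperplane through the origin in ℝ^d orthogonal to unit vector q̂, let w be a unit vector not proportional to q̂ with angle θ ∈ (0,π) between q̂ and w, and let δ > 0. Then any point p ∈ H with |p·w| ≤ δ lies within distance δ/sin θ of the subspace H ∩ w^⊥. -/

import Mathlib

open RealInnerProductSpace

theorem stmt_19 (d : ℕ) (qhat w : EuclideanSpace ℝ (Fin d))
    (hq : ‖qhat‖ = 1) (hw : ‖w‖ = 1) (hne : w ≠ qhat ∧ w ≠ -qhat)
    (θ : ℝ) (hθ : θ ∈ Set.Ioo (0 : ℝ) Real.pi) (hcos : Real.cos θ = ⟪qhat, w⟫)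
    (δ : ℝ) (hδ : 0 < δ)
    (p : EuclideanSpace ℝ (Fin d)) (hp : ⟪qhat, p⟫ = 0) (hpw : |⟪p, w⟫| ≤ δ) :
    Metric.infDist p {x : EuclideanSpace ℝ (Fin d) | ⟪qhat, x⟫ = 0 ∧ ⟪w, x⟫ = 0} ≤
      δ / Real.sin θ := by
  have hsin : 0 < Real.sin θ := Real.sin_pos_of_pos_of_lt_pi hθ.1 hθ.2
  set w' : EuclideanSpace ℝ (Fin d) := w - (Real.cos θ) • qhat with hw'
  have hqq : ⟪qhat, qhat⟫ = 1 := by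
    rw [real_inner_self_eq_norm_sq, hq]; ring
  have hqw' : ⟪qhat, w'⟫ = 0 := by
    rw [hw', inner_sub_right, real_inner_smul_right, hqq, ← hcos]; ring
  have hww' : ⟪w, w'⟫ = Real.sin θ ^ 2 := by
    have hww : ⟪w, w⟫ = 1 := by rw [real_inner_self_eq_norm_sq, hw]; ring
    rw [hw', inner_sub_right, real_inner_smul_right, hww, real_inner_comm qhat w, ← hcos]
    nlinarith [Real.sin_sq_add_cos_sq θ]
  have hnw'sq : ‖w'‖ ^ 2 = Real.sin θ ^ 2 := by
    rw [← real_inner_self_eq_norm_sq, hw', inner_sub_left, real_inner_smul_left,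
      ← hw', hww', hqw']
    ring
  have hnw' : ‖w'‖ = Real.sin θ := by
    have h1 : ‖w'‖ = Real.sqrt (Real.sin θ ^ 2) := by
      rw [← hnw'sq, Real.sqrt_sq (norm_nonneg _)]
    rw [h1, Real.sqrt_sq hsin.le]
  set c : ℝ := ⟪p, w⟫ / Real.sin θ ^ 2 with hc
  set x : EuclideanSpace ℝ (Fin d) := p - c • w' with hx
  have hmem : x ∈ {x : EuclideanSpace ℝ (Fin d) | ⟪qhat, x⟫ = 0 ∧ ⟪w, x⟫ = 0} := by
    constructor
    · rw [hx, inner_sub_right, real_inner_smul_right, hp, hqw']; ring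
    · rw [hx, inner_sub_right, real_inner_smul_right, hww', hc, real_inner_comm w p]
      field_simp
      ring
  have hdist : dist p x = |⟪p, w⟫| / Real.sin θ := by
    rw [dist_eq_norm]
    have : p - x = c • w' := by rw [hx]; abel
    rw [this, norm_smul, hnw', hc, Real.norm_eq_abs, abs_div, abs_pow,
      abs_of_pos hsin]
    field_simp
  calc Metric.infDist p {x : EuclideanSpace ℝ (Fin d) | ⟪qhat, x⟫ = 0 ∧ ⟪w, x⟫ = 0}
      ≤ dist p x := Metric.infDist_le_dist_of_mem hmem
    _ = |⟪p, w⟫| / Real.sin θ := hdist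
    _ ≤ δ / Real.sin θ := by gcongr
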